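/- Let G be a countable group acting faithfully on the right by homeomorphisms on a second countable Hausdorff topological space X, and let μ be an invariant random subgroup of G. Suppose an open set U ⊆ X has the property that there is an infinite simple subgroup A ≤ R_G(U) such that every finite-index subgroup of R_G(U) contains A. Then μ-almost every subgroup H ≤ G has the following property: if H contains an element g such that U ∩ (U·g) = ∅, then A ≤ H. -/

import Mathlib

open MulOpposite MeasureTheory

/-- The σ-algebra on the space of subgroups of `G`, generated by the sets
`{H : g ∈ H}` for `g ∈ G` (the Borel σ-algebra of the Chabauty topology). -/
instance subgroupMeasurableSpace (G : Type*) [Group G] : MeasurableSpace (Subgroup G) :=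
  MeasurableSpace.generateFrom {A : Set (Subgroup G) | ∃ g : G, A = {H : Subgroup G | g ∈ H}}

/-- Conjugation `H ↦ g⁻¹ H g` on subgroups. -/
def conjSubgroup {G : Type*} [Group G] (g : G) (H : Subgroup G) : Subgroup G :=
  Subgroup.map (MulAut.conj g⁻¹).toMonoidHom H

/-- Pointwise stabilizer of a set `A ⊆ X` for a right action of `G` on `X`:
`{g ∈ G : x·g = x for all x ∈ A}`. -/
def pointwiseStabilizer (G : Type*) {X : Type*} [Group G] [MulAction Gᵐᵒᵖ X] (A : Set X) :
    Subgroup G where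
  carrier := {g : G | ∀ x ∈ A, op g • x = x}
  one_mem' := by intro x _; simp
  mul_mem' := by
    intro g h hg hh x hx
    have h1 : op (g * h) • x = op h • (op g • x) := by
      rw [op_mul, mul_smul]
    rw [h1, hg x hx, hh x hx]
  inv_mem' := by
    intro g hg x hx
    have h1 : op g⁻¹ • (op g • x) = x := by
      rw [op_inv]; exact inv_smul_smul _ _
    rw [hg x hx] at h1
    exact h1

/-- Rigid stabilizer `R_G(U) = {g ∈ G : x·g = x for all x ∈ X \ U}`. -/
def rigidStabilizer (G : Type*) {X : Type*} [Group G] [MulAction Gᵐᵒᵖ X] (U : Set X) :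
    Subgroup G :=
  pointwiseStabilizer G Uᶜ

/-- The fixed-point set of a subgroup `H` in `X`: `Fix(H) = {x : x·h = x for all h ∈ H}`. -/
def fixedSet (X : Type*) {G : Type*} [Group G] [MulAction Gᵐᵒᵖ X] (H : Subgroup G) : Set X :=
  {x : X | ∀ h ∈ H, op h • x = x}

/-! ### Group-theoretic facts about infinite simple groups -/

section SimpleGroups

variable {Γ : Type*} [Group Γ]

/-- In an infinite simple group, every subgroup of finite (nonzero) index is the whole group. -/
theorem aux_eq_top_of_index_ne_zero [Infinite Γ] [IsSimpleGroup Γ] (K : Subgroup Γ)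
    (h : K.index ≠ 0) : K = ⊤ := by
  rw [Subgroup.index_eq_card] at h
  have hfin : Finite (Γ ⧸ K) := (Nat.card_ne_zero.mp h).2
  have hn : K.normalCore.Normal := inferInstance
  rcases hn.eq_bot_or_eq_top with hb | ht
  · exfalso
    have hker : (MulAction.toPermHom Γ (Γ ⧸ K)).ker = ⊥ := by
      rw [← Subgroup.normalCore_eq_ker]; exact hb
    have hinj : Function.Injective (MulAction.toPermHom Γ (Γ ⧸ K)) :=
      (MonoidHom.ker_eq_bot_iff _).mp hker
    have : Finite Γ := Finite.of_injective _ hinj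
    exact not_finite Γ
  · exact top_unique (ht ▸ K.normalCore_le)

/-- Infinite simple groups are ICC: centralizers of nontrivial elements have infinite index. -/
theorem aux_centralizer_index_eq_zero [Infinite Γ] [IsSimpleGroup Γ] {u : Γ} (hu : u ≠ 1) :
    (Subgroup.centralizer {u}).index = 0 := by
  by_contra h
  have htop := aux_eq_top_of_index_ne_zero _ h
  have hcen : u ∈ Subgroup.center Γ := by
    rw [Subgroup.mem_center_iff]
    intro gg
    have hgg : gg ∈ Subgroup.centralizer {u} := htop ▸ Subgroup.mem_top gg
    exact (Subgroup.mem_centralizer_iff.mp hgg u rfl).symm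
  have hZ : (Subgroup.center Γ).Normal := inferInstance
  rcases hZ.eq_bot_or_eq_top with hb | ht
  · rw [hb, Subgroup.mem_bot] at hcen; exact hu hcen
  · -- the group is abelian; derive a contradiction with infinite + simple
    have hcomm : ∀ a b : Γ, a * b = b * a := by
      intro a b
      have hb' : b ∈ Subgroup.center Γ := ht ▸ Subgroup.mem_top b
      exact Subgroup.mem_center_iff.mp hb' a
    have hnorm : ∀ S : Subgroup Γ, S.Normal := by
      intro S
      constructor
      intro s hs gg
      have : gg * s * gg⁻¹ = s := by
        rw [hcomm gg s, mul_inv_cancel_right]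
      rw [this]; exact hs
    have hzu : Subgroup.zpowers u = ⊤ := by
      rcases (hnorm (Subgroup.zpowers u)).eq_bot_or_eq_top with hb' | ht'
      · exfalso
        have := Subgroup.mem_zpowers u
        rw [hb', Subgroup.mem_bot] at this
        exact hu this
      · exact ht'
    have hIof : ¬ IsOfFinOrder u := by
      intro hf
      have hfin2 := hf.finite_zpowers
      rw [hzu, Subgroup.coe_top, Set.finite_univ_iff] at hfin2
      exact not_finite Γ
    rcases (hnorm (Subgroup.zpowers (u * u))).eq_bot_or_eq_top with hb' | ht'
    · have : u * u ∈ Subgroup.zpowers (u * u) := Subgroup.mem_zpowers _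
      rw [hb', Subgroup.mem_bot] at this
      exact hIof (isOfFinOrder_iff_pow_eq_one.mpr ⟨2, two_pos, by rw [pow_two]; exact this⟩)
    · have hmem : u ∈ Subgroup.zpowers (u * u) := ht' ▸ Subgroup.mem_top u
      obtain ⟨k, hk⟩ := Subgroup.mem_zpowers_iff.mp hmem
      have hk' : u ^ ((2:ℤ) * k) = u := by
        rw [zpow_mul, zpow_two]
        exact hk
      have h1 : u ^ ((2:ℤ) * k - 1) = 1 := by
        rw [zpow_sub, hk', zpow_one, mul_inv_cancel]
      have h2 : ((orderOf u : ℤ)) ∣ ((2:ℤ) * k - 1) := orderOf_dvd_iff_zpow_eq_one.mpr h1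
      rw [orderOf_eq_zero_iff.mpr hIof] at h2
      have := zero_dvd_iff.mp (by exact_mod_cast h2)
      omega

/-- From a subgroup of infinite index one can pick arbitrarily many elements in
pairwise distinct left cosets. -/
theorem aux_exists_tuple_of_index_eq_zero (K : Subgroup Γ) (h : K.index = 0) (m : ℕ) :
    ∃ t : Fin m → Γ, ∀ i j : Fin m, i ≠ j → (t i)⁻¹ * t j ∉ K := by
  have hinf : Infinite (Γ ⧸ K) := by
    rw [Subgroup.index_eq_card] at h
    rcases Nat.card_eq_zero.mp h with he | hi
    · exact (he.false ((1 : Γ) : Γ ⧸ K)).elim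
    · exact hi
  let e := Infinite.natEmbedding (Γ ⧸ K)
  refine ⟨fun i => (e i.val).out, fun i j hij hK => ?_⟩
  have h2 : (((e i.val).out : Γ) : Γ ⧸ K) = (((e j.val).out : Γ) : Γ ⧸ K) :=
    QuotientGroup.eq.mpr hK
  rw [QuotientGroup.out_eq', QuotientGroup.out_eq'] at h2
  exact hij (Fin.val_injective (e.injective h2))

end SimpleGroups

/-! ### The abstract "gap lemma" -/

/-- **Gap lemma.** Let a countable group `Γ` act by measure-preserving transformations on a
probability space, and let `B` be a measurable set whose return times are confined to a
subgroup `N ω` of infinite index that is constant along returns. Then `B` is null. -/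
theorem gapLemma {Γ Ω : Type*} [Group Γ] [Countable Γ] [MeasurableSpace Ω]
    (μ : Measure Ω) [IsProbabilityMeasure μ]
    (T : Γ → Ω → Ω)
    (hTmeas : ∀ γ : Γ, Measurable (T γ))
    (hTmul : ∀ γ δ : Γ, ∀ ω : Ω, T (γ * δ) ω = T γ (T δ ω))
    (hTinv : ∀ γ : Γ, ∀ S : Set Ω, MeasurableSet S → μ (T γ ⁻¹' S) = μ S)
    (B : Set Ω) (hB : MeasurableSet B)
    (N : Ω → Subgroup Γ)
    (hNmeas : ∀ u : Γ, MeasurableSet {ω | ω ∈ B ∧ u ∈ N ω})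
    (hconf : ∀ ω ∈ B, ∀ a : Γ, T a⁻¹ ω ∈ B → a ∈ N ω)
    (hcons : ∀ ω ∈ B, ∀ a : Γ, T a⁻¹ ω ∈ B → N (T a⁻¹ ω) = N ω)
    (hinf : ∀ ω ∈ B, (N ω).index = 0) :
    μ B = 0 := by
  classical
  have hTcomp : ∀ (d γ : Γ) (ω : Ω), T d (T γ ω) = T (d * γ) ω := fun d γ ω => (hTmul d γ ω).symm
  have key : ∀ n : ℕ, ((n : ENNReal) + 1) * μ B ≤ 1 := by
    intro n
    set m := n + 1 with hm
    -- "good" sets for a tuple of coset representatives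
    set W : Γ → Set Ω := fun u => {ω | ω ∈ B ∧ u ∈ N ω} with hW
    set Good : (Fin m → Γ) → Set Ω := fun t =>
      ⋂ (d : Γ), ⋂ (i : Fin m), ⋂ (j : Fin m), ⋂ (_ : i ≠ j),
        (T d⁻¹) ⁻¹' (W ((t i)⁻¹ * t j))ᶜ with hGood
    have hGoodMeas : ∀ t, MeasurableSet (Good t) := by
      intro t
      exact MeasurableSet.iInter fun d => MeasurableSet.iInter fun i =>
        MeasurableSet.iInter fun j => MeasurableSet.iInter fun _ =>
          (hTmeas d⁻¹) (hNmeas _).compl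
    have hGoodMem : ∀ t ω, ω ∈ Good t ↔
        ∀ d : Γ, T d⁻¹ ω ∈ B → ∀ i j : Fin m, i ≠ j → (t i)⁻¹ * t j ∉ N (T d⁻¹ ω) := by
      intro t ω
      simp only [hGood, Set.mem_iInter, Set.mem_preimage, Set.mem_compl_iff, hW,
        Set.mem_setOf_eq, not_and]
      constructor
      · intro h d hd i j hij
        exact h d i j hij hd
      · intro h d i j hij hd
        exact h d hd i j hij
    have hGoodInv : ∀ t (γ : Γ), (T γ) ⁻¹' (Good t) = Good t := by
      intro t γ
      ext ω
      simp only [Set.mem_preimage]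
      rw [hGoodMem, hGoodMem]
      constructor
      · intro h d
        have e1 : T (γ * d)⁻¹ (T γ ω) = T d⁻¹ ω := by
          rw [mul_inv_rev, hTcomp]
          congr 1
          group
        intro hd
        have := h (γ * d)
        rw [e1] at this
        exact this hd
      · intro h d
        have e1 : T d⁻¹ (T γ ω) = T (γ⁻¹ * d)⁻¹ ω := by
          rw [hTcomp, mul_inv_rev]
          congr 1
          group
        rw [e1]
        exact h (γ⁻¹ * d)
    have hCover : ∀ ω ∈ B, ∃ t : Fin m → Γ, ω ∈ Good t := by
      intro ω hω
      obtain ⟨t, ht⟩ := aux_exists_tuple_of_index_eq_zero (N ω) (hinf ω hω) m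
      refine ⟨t, (hGoodMem t ω).mpr ?_⟩
      intro d hd i j hij
      rw [hcons ω hω d hd]
      exact ht i j hij
    obtain ⟨e, he⟩ := exists_surjective_nat (Fin m → Γ)
    set C : ℕ → Set Ω := fun k => Good (e k) \ ⋃ (j : ℕ), ⋃ (_ : j < k), Good (e j) with hC
    have hCMeas : ∀ k, MeasurableSet (C k) :=
      fun k => (hGoodMeas _).diff
        (MeasurableSet.iUnion fun j => MeasurableSet.iUnion fun _ => hGoodMeas _)
    have hCInv : ∀ (k : ℕ) (γ : Γ), (T γ) ⁻¹' (C k) = C k := by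
      intro k γ
      simp only [hC, Set.preimage_diff, Set.preimage_iUnion, hGoodInv]
    have hCsubGood : ∀ k, C k ⊆ Good (e k) := fun k => Set.diff_subset
    have hCDisj : Pairwise (Function.onFun Disjoint C) := by
      intro k l hkl
      rcases lt_or_gt_of_ne hkl with h | h
      · refine Set.disjoint_left.mpr fun ω hk hl => ?_
        exact hl.2 (Set.mem_iUnion.mpr ⟨k, Set.mem_iUnion.mpr ⟨h, hk.1⟩⟩)
      · refine Set.disjoint_left.mpr fun ω hk hl => ?_
        exact hk.2 (Set.mem_iUnion.mpr ⟨l, Set.mem_iUnion.mpr ⟨h, hl.1⟩⟩)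
    have hBC : B ⊆ ⋃ k, C k := by
      intro ω hω
      obtain ⟨t, ht⟩ := hCover ω hω
      obtain ⟨k, rfl⟩ := he t
      have hex : ∃ k', ω ∈ Good (e k') := ⟨k, ht⟩
      refine Set.mem_iUnion.mpr ⟨Nat.find hex, Nat.find_spec hex, ?_⟩
      intro hmem
      obtain ⟨j, hj⟩ := Set.mem_iUnion.mp hmem
      obtain ⟨hjk, hjG⟩ := Set.mem_iUnion.mp hj
      exact Nat.find_min hex hjk hjG
    have hk : ∀ k : ℕ, ((n : ENNReal) + 1) * μ (B ∩ C k) ≤ μ (C k) := by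
      intro k
      set t := e k with htk
      set V : Fin m → Set Ω := fun i => (T (t i)⁻¹) ⁻¹' (B ∩ C k) with hV
      have hVmeas : ∀ i, MeasurableSet (V i) := fun i => (hTmeas _) (hB.inter (hCMeas k))
      have hVeq : ∀ i, μ (V i) = μ (B ∩ C k) := fun i => hTinv _ _ (hB.inter (hCMeas k))
      have hVsub : ∀ i, V i ⊆ C k := by
        intro i ω hω
        have h2 : T (t i)⁻¹ ω ∈ C k := hω.2
        have := hCInv k (t i)⁻¹
        rw [← this]
        exact h2
      have hVdisj : Pairwise (Function.onFun Disjoint V) := by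
        intro i j hij
        refine Set.disjoint_left.mpr fun ω hi hj => ?_
        have hωC : ω ∈ C k := hVsub i hi
        have hωG : ω ∈ Good t := hCsubGood k hωC
        have h1 : T (t i)⁻¹ ω ∈ B := hi.1
        have h2 : T (t j)⁻¹ ω ∈ B := hj.1
        have hnot := (hGoodMem t ω).mp hωG (t i) h1 i j hij
        refine hnot (hconf _ h1 _ ?_)
        have e2 : T ((t i)⁻¹ * t j)⁻¹ (T (t i)⁻¹ ω) = T (t j)⁻¹ ω := by
          rw [hTcomp]
          congr 1
          group
        rw [e2]
        exact h2
      have hUnion : μ (⋃ i, V i) = ∑' i : Fin m, μ (V i) := measure_iUnion hVdisj hVmeas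
      have hsum : ∑' i : Fin m, μ (V i) = ((n : ENNReal) + 1) * μ (B ∩ C k) := by
        rw [tsum_fintype]
        simp only [hVeq]
        rw [Finset.sum_const, Finset.card_univ, Fintype.card_fin, nsmul_eq_mul]
        congr 1
        rw [hm]
        push_cast
        ring
      calc ((n : ENNReal) + 1) * μ (B ∩ C k) = μ (⋃ i, V i) := by rw [hUnion, hsum]
        _ ≤ μ (C k) := measure_mono (Set.iUnion_subset hVsub)
    have hBeq : μ B ≤ ∑' k, μ (B ∩ C k) := by
      have : B = ⋃ k, B ∩ C k := by
        rw [← Set.inter_iUnion]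
        exact (Set.inter_eq_left.mpr hBC).symm
      calc μ B = μ (⋃ k, B ∩ C k) := by rw [← this]
        _ ≤ ∑' k, μ (B ∩ C k) := measure_iUnion_le (μ := μ) fun k => B ∩ C k
    calc ((n : ENNReal) + 1) * μ B ≤ ((n : ENNReal) + 1) * ∑' k, μ (B ∩ C k) := by gcongr
      _ = ∑' k, ((n : ENNReal) + 1) * μ (B ∩ C k) := ENNReal.tsum_mul_left.symm
      _ ≤ ∑' k, μ (C k) := ENNReal.tsum_le_tsum hk
      _ = μ (⋃ k, C k) := (measure_iUnion hCDisj hCMeas).symm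
      _ ≤ 1 := prob_le_one
  by_contra hμ
  have h0 : μ B ≠ 0 := hμ
  have hne : 1 / μ B ≠ ⊤ := by
    simp [ENNReal.div_eq_top, h0]
  obtain ⟨n, hn⟩ := ENNReal.exists_nat_gt hne
  have hmul : (1 / μ B) * μ B < (n : ENNReal) * μ B :=
    ENNReal.mul_lt_mul_left h0 (measure_ne_top μ B) hn
  rw [ENNReal.div_mul_cancel h0 (measure_ne_top μ B)] at hmul
  have hle : (n : ENNReal) * μ B ≤ ((n : ENNReal) + 1) * μ B := by
    gcongr
    exact le_self_add
  exact absurd (hmul.trans_le (hle.trans (key n))) (lt_irrefl 1)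

/-! ### Right-action facts -/

section RightAction

variable {G X : Type*} [Group G] [MulAction Gᵐᵒᵖ X]

theorem mem_rigidStabilizer_iff {U : Set X} {h : G} :
    h ∈ rigidStabilizer G U ↔ ∀ x : X, x ∉ U → op h • x = x := Iff.rfl

theorem smul_op_mul' (h k : G) (x : X) : op (h * k) • x = op k • (op h • x) := by
  rw [op_mul, mul_smul]

theorem rigid_maps_to {U : Set X} {h : G} (hh : h ∈ rigidStabilizer G U) :
    ∀ x ∈ U, op h • x ∈ U := by
  intro x hx
  by_contra hc
  have h2 : op h⁻¹ • (op h • x) = op h • x :=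
    mem_rigidStabilizer_iff.mp (inv_mem hh) _ hc
  have h3 : op h⁻¹ • (op h • x) = x := by
    rw [← smul_op_mul', mul_inv_cancel]
    simp
  rw [h3] at h2
  exact hc (by rw [← h2]; exact hx)

theorem commute_of_disjoint {U V : Set X} (hUV : U ∩ V = ∅)
    (hfaith : ∀ g : G, (∀ x : X, op g • x = x) → g = 1)
    {a c : G} (ha : a ∈ rigidStabilizer G U) (hc : c ∈ rigidStabilizer G V) :
    a * c = c * a := by
  have hdisj : ∀ x : X, x ∈ U → x ∈ V → False := by
    intro x h1 h2
    have := Set.eq_empty_iff_forall_notMem.mp hUV x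
    exact this ⟨h1, h2⟩
  have key : ∀ x : X, op (a * c) • x = op (c * a) • x := by
    intro x
    rw [smul_op_mul', smul_op_mul']
    by_cases hx : x ∈ U
    · have hxV : x ∉ V := fun hv => hdisj x hx hv
      have h1 : op a • x ∈ U := rigid_maps_to ha x hx
      have h1V : op a • x ∉ V := fun hv => hdisj _ h1 hv
      rw [mem_rigidStabilizer_iff.mp hc _ h1V, mem_rigidStabilizer_iff.mp hc _ hxV]
    · by_cases hxV : x ∈ V
      · have h2 : op c • x ∈ V := rigid_maps_to hc x hxV
        have h2U : op c • x ∉ U := fun hu => hdisj _ hu h2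
        rw [mem_rigidStabilizer_iff.mp ha _ hx, mem_rigidStabilizer_iff.mp ha _ h2U]
      · rw [mem_rigidStabilizer_iff.mp ha _ hx, mem_rigidStabilizer_iff.mp hc _ hxV,
          mem_rigidStabilizer_iff.mp ha _ hx]
  have hone : (c * a)⁻¹ * (a * c) = 1 := by
    apply hfaith
    intro x
    rw [smul_op_mul', key (op (c * a)⁻¹ • x), ← smul_op_mul', inv_mul_cancel]
    simp
  have := inv_mul_eq_one.mp hone
  exact this.symm

theorem conj_mem_rigidStabilizer_image {U : Set X} {g x : G}
    (hx : x ∈ rigidStabilizer G U) :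
    g * x * g⁻¹ ∈ rigidStabilizer G ((fun y : X => op g⁻¹ • y) '' U) := by
  rw [mem_rigidStabilizer_iff]
  intro y hy
  have hgy : op g • y ∉ U := by
    intro hu
    exact hy ⟨op g • y, hu, by show op g⁻¹ • (op g • y) = y; rw [← smul_op_mul', mul_inv_cancel]; simp⟩
  have e1 : op (g * x * g⁻¹) • y = op g⁻¹ • (op x • (op g • y)) := by
    rw [smul_op_mul', smul_op_mul']
  rw [e1, mem_rigidStabilizer_iff.mp hx _ hgy, ← smul_op_mul', mul_inv_cancel]
  simp

end RightAction

/-! ### conjSubgroup and measurability facts -/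

section ConjMeasure

variable {G : Type*} [Group G]

theorem mem_conjSubgroup {c y : G} {H : Subgroup G} :
    y ∈ conjSubgroup c H ↔ c * y * c⁻¹ ∈ H := by
  simp only [conjSubgroup, Subgroup.mem_map, MulEquiv.coe_toMonoidHom, MulAut.conj_apply]
  constructor
  · rintro ⟨z, hz, he⟩
    have : z = c * y * c⁻¹ := by rw [← he]; group
    exact this ▸ hz
  · intro h
    exact ⟨c * y * c⁻¹, h, by group⟩

theorem measurableSet_memEvent (x : G) : MeasurableSet {H : Subgroup G | x ∈ H} :=
  MeasurableSpace.measurableSet_generateFrom ⟨x, rfl⟩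

theorem measurable_conjSubgroup (c : G) :
    Measurable (conjSubgroup c : Subgroup G → Subgroup G) := by
  apply measurable_generateFrom
  rintro t ⟨x, rfl⟩
  have : (conjSubgroup c) ⁻¹' {H : Subgroup G | x ∈ H} = {H : Subgroup G | c * x * c⁻¹ ∈ H} := by
    ext H
    simp [Set.mem_preimage, mem_conjSubgroup]
  rw [this]
  exact measurableSet_memEvent _

theorem measurableSet_iffSet {Ω : Type*} [MeasurableSpace Ω] {P Q : Ω → Prop}
    (hP : MeasurableSet {ω | P ω}) (hQ : MeasurableSet {ω | Q ω}) :
    MeasurableSet {ω | P ω ↔ Q ω} := by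
  have : {ω | P ω ↔ Q ω} = ({ω | P ω} ∩ {ω | Q ω}) ∪ ({ω | P ω}ᶜ ∩ {ω | Q ω}ᶜ) := by
    ext ω
    by_cases h1 : P ω <;> by_cases h2 : Q ω <;> simp [h1, h2]
  rw [this]
  exact (hP.inter hQ).union (hP.compl.inter hQ.compl)

end ConjMeasure

/-! ### The main lemma for a fixed translating element -/

theorem perG_null
    {G X : Type*} [Group G] [Countable G] [MulAction Gᵐᵒᵖ X]
    (hfaith : ∀ g : G, (∀ x : X, op g • x = x) → g = 1)
    (U : Set X)
    (A : Subgroup G) (hAinf : Infinite A) (hAsimple : IsSimpleGroup A)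
    (hAle : A ≤ rigidStabilizer G U)
    (μ : Measure (Subgroup G)) [IsProbabilityMeasure μ]
    (hinv : ∀ g : G, ∀ B : Set (Subgroup G), MeasurableSet B →
      μ ((fun H : Subgroup G => conjSubgroup g H) ⁻¹' B) = μ B)
    (g : G) (hg : U ∩ ((fun x : X => op g • x) '' U) = ∅) :
    μ {H : Subgroup G | g ∈ H ∧ ¬ A ≤ H} = 0 := by
  classical
  haveI := hAinf
  haveI := hAsimple
  -- the translated set and its rigid stabilizer
  set V : Set X := (fun y : X => op g⁻¹ • y) '' U with hVdef
  have hUV : U ∩ V = ∅ := by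
    rw [Set.eq_empty_iff_forall_notMem]
    rintro x ⟨hxU, u, huU, rfl⟩
    have he : op g • (op g⁻¹ • u) = u := by
      rw [← smul_op_mul', inv_mul_cancel]; simp
    have hmem : u ∈ U ∩ ((fun x : X => op g • x) '' U) :=
      ⟨huU, ⟨op g⁻¹ • u, hxU, he⟩⟩
    rw [hg] at hmem
    exact hmem
  have hcomm : ∀ x ∈ rigidStabilizer G U, ∀ c ∈ rigidStabilizer G V, x * c = c * x :=
    fun x hx c hc => commute_of_disjoint hUV hfaith hx hc
  have hconjV : ∀ x ∈ rigidStabilizer G U, g * x * g⁻¹ ∈ rigidStabilizer G V :=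
    fun x hx => conj_mem_rigidStabilizer_image hx
  have hAU : ∀ a : ↥A, (a : G) ∈ rigidStabilizer G U := fun a => hAle a.2
  -- the conjugation action of ↥A
  set T : ↥A → Subgroup G → Subgroup G := fun a H => conjSubgroup ((a : G)⁻¹) H with hT
  have hTmem : ∀ (a : ↥A) (H : Subgroup G) (y : G),
      y ∈ T a H ↔ (a : G)⁻¹ * y * (a : G) ∈ H := by
    intro a H y
    have h1 : T a H = conjSubgroup ((a : G)⁻¹) H := by rw [hT]
    rw [h1, mem_conjSubgroup, inv_inv]
  have hTmul : ∀ (a b : ↥A) (H : Subgroup G), T (a * b) H = T a (T b H) := by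
    intro a b H
    ext y
    rw [hTmem, hTmem, hTmem]
    have e : ((a * b : ↥A) : G)⁻¹ * y * ((a * b : ↥A) : G)
        = (b : G)⁻¹ * ((a : G)⁻¹ * y * (a : G)) * (b : G) := by
      push_cast
      group
    rw [e]
  have hTmeas : ∀ a : ↥A, Measurable (T a) := by
    intro a
    have h1 : T a = conjSubgroup ((a : G)⁻¹) := by rw [hT]
    rw [h1]
    exact measurable_conjSubgroup _
  have hTinv : ∀ (a : ↥A) (S : Set (Subgroup G)), MeasurableSet S → μ (T a ⁻¹' S) = μ S := by
    intro a S hS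
    have h1 : T a = fun H => conjSubgroup ((a : G)⁻¹) H := by rw [hT]
    rw [h1]
    exact hinv _ S hS
  -- basic events
  set E : Set (Subgroup G) := {H | g ∈ H} with hE
  have hEmeas : MeasurableSet E := measurableSet_memEvent g
  have hEmem : ∀ H : Subgroup G, H ∈ E ↔ g ∈ H := fun H => Iff.rfl
  set Triv : Set (Subgroup G) := {H | ∀ x : ↥A, (x : G) ∈ H → x = 1} with hTriv
  have hTrivmem : ∀ H : Subgroup G, H ∈ Triv ↔ ∀ x : ↥A, (x : G) ∈ H → x = 1 :=
    fun H => Iff.rfl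
  have hTrivmeas : MeasurableSet Triv := by
    have h1 : Triv = ⋂ (x : ↥A), ⋂ (_ : x ≠ 1), {H : Subgroup G | (x : G) ∈ H}ᶜ := by
      ext H
      simp only [hTriv, Set.mem_setOf_eq, Set.mem_iInter, Set.mem_compl_iff]
      constructor
      · intro h x hx hmem
        exact hx (h x hmem)
      · intro h x hmem
        by_contra hne
        exact h x hne hmem
    rw [h1]
    exact MeasurableSet.iInter fun x => MeasurableSet.iInter fun _ =>
      (measurableSet_memEvent _).compl
  -- key deterministic fact (K1)
  have K1 : ∀ (H : Subgroup G) (a : ↥A), g ∈ H → (a : G) * g * (a : G)⁻¹ ∈ H →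
      ∀ x ∈ rigidStabilizer G U, (x ∈ H ↔ (a : G) * x * (a : G)⁻¹ ∈ H) := by
    intro H a hgH haH x hxU
    have hcV : g * (a : G)⁻¹ * g⁻¹ ∈ rigidStabilizer G V := hconjV _ (inv_mem (hAU a))
    have htH : (a : G) * (g * (a : G)⁻¹ * g⁻¹) ∈ H := by
      have e : (a : G) * (g * (a : G)⁻¹ * g⁻¹) = ((a : G) * g * (a : G)⁻¹) * g⁻¹ := by group
      rw [e]
      exact mul_mem haH (inv_mem hgH)
    have hxc : x * (g * (a : G)⁻¹ * g⁻¹) = (g * (a : G)⁻¹ * g⁻¹) * x := hcomm x hxU _ hcV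
    have e1 : ((a : G) * (g * (a : G)⁻¹ * g⁻¹)) * x * ((a : G) * (g * (a : G)⁻¹ * g⁻¹))⁻¹
        = (a : G) * x * (a : G)⁻¹ := by
      calc ((a : G) * (g * (a : G)⁻¹ * g⁻¹)) * x * ((a : G) * (g * (a : G)⁻¹ * g⁻¹))⁻¹
          = (a : G) * ((g * (a : G)⁻¹ * g⁻¹) * x) * (g * (a : G)⁻¹ * g⁻¹)⁻¹ * (a : G)⁻¹ := by
            group
        _ = (a : G) * (x * (g * (a : G)⁻¹ * g⁻¹)) * (g * (a : G)⁻¹ * g⁻¹)⁻¹ * (a : G)⁻¹ := by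
            rw [hxc]
        _ = (a : G) * x * (a : G)⁻¹ := by group
    constructor
    · intro hx
      rw [← e1]
      exact mul_mem (mul_mem htH hx) (inv_mem htH)
    · intro hx
      have e2 : x = ((a : G) * (g * (a : G)⁻¹ * g⁻¹))⁻¹ * ((a : G) * x * (a : G)⁻¹)
          * ((a : G) * (g * (a : G)⁻¹ * g⁻¹)) := by
        rw [← e1]; group
      rw [e2]
      exact mul_mem (mul_mem (inv_mem htH) hx) htH
  -- the first bad event: trivial intersection with A
  set B1 : Set (Subgroup G) := E ∩ Triv with hB1
  have hB1meas : MeasurableSet B1 := hEmeas.inter hTrivmeas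
  -- K2: the commutation trick in the trivial-intersection case
  have K2 : ∀ (H : Subgroup G) (u a : ↥A), H ∈ B1 →
      (u : G) * g * (u : G)⁻¹ ∈ H → (a : G) * g * (a : G)⁻¹ ∈ H →
      ((a : G) * (u : G)) * g * ((a : G) * (u : G))⁻¹ ∈ H → a * u = u * a := by
    intro H u a hH hu ha hau
    have hgH : g ∈ H := (hEmem H).mp hH.1
    have hTr : ∀ x : ↥A, (x : G) ∈ H → x = 1 := (hTrivmem H).mp hH.2
    have w_u : (u : G) * g * (u : G)⁻¹ * g⁻¹ ∈ H := mul_mem hu (inv_mem hgH)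
    have w_a : (a : G) * g * (a : G)⁻¹ * g⁻¹ ∈ H := mul_mem ha (inv_mem hgH)
    have w_au : ((a : G) * (u : G)) * g * ((a : G) * (u : G))⁻¹ * g⁻¹ ∈ H :=
      mul_mem hau (inv_mem hgH)
    have hc : g * (u : G) * g⁻¹ ∈ rigidStabilizer G V := hconjV _ (hAU u)
    have hz : (u : G)⁻¹ * (a : G)⁻¹ * (u : G) ∈ rigidStabilizer G U := by
      have e : ((u⁻¹ * a⁻¹ * u : ↥A) : G) = (u : G)⁻¹ * (a : G)⁻¹ * (u : G) := by
        push_cast; rfl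
      rw [← e]
      exact hAU _
    have hzc : ((u : G)⁻¹ * (a : G)⁻¹ * (u : G)) * (g * (u : G) * g⁻¹)
        = (g * (u : G) * g⁻¹) * ((u : G)⁻¹ * (a : G)⁻¹ * (u : G)) := hcomm _ hz _ hc
    have hidentity : ((a : G) * g * (a : G)⁻¹ * g⁻¹)
        * (((a : G) * (u : G)) * g * ((a : G) * (u : G))⁻¹ * g⁻¹)⁻¹
        * ((u : G) * g * (u : G)⁻¹ * g⁻¹)
        = (a : G) * ((g * (u : G) * g⁻¹) * ((u : G)⁻¹ * (a : G)⁻¹ * (u : G))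
          * (g * (u : G) * g⁻¹)⁻¹) := by
      group
    have hconj : (g * (u : G) * g⁻¹) * ((u : G)⁻¹ * (a : G)⁻¹ * (u : G))
        * (g * (u : G) * g⁻¹)⁻¹ = (u : G)⁻¹ * (a : G)⁻¹ * (u : G) := by
      rw [← hzc]
      group
    have hyH : (a : G) * ((u : G)⁻¹ * (a : G)⁻¹ * (u : G)) ∈ H := by
      rw [← hconj, ← hidentity]
      exact mul_mem (mul_mem w_a (inv_mem w_au)) w_u
    have hyA : ((a * (u⁻¹ * a⁻¹ * u) : ↥A) : G)
        = (a : G) * ((u : G)⁻¹ * (a : G)⁻¹ * (u : G)) := by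
      push_cast; rfl
    have h1 : a * (u⁻¹ * a⁻¹ * u) = 1 := hTr _ (by rw [hyA]; exact hyH)
    have h2 : a * u⁻¹ * a⁻¹ = u⁻¹ := by
      have h1' : a * u⁻¹ * a⁻¹ * u = 1 := by rw [← h1]; group
      have h1'' := mul_eq_one_iff_eq_inv.mp h1'
      rw [h1'']
    have h3 : a * u⁻¹ = u⁻¹ * a := by
      conv_rhs => rw [← h2]
      exact (inv_mul_cancel_right (a * u⁻¹) a).symm
    have h4 : Commute a u⁻¹ := h3
    exact Commute.inv_right_iff.mp h4
  -- gap-lemma application (a)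
  have hBu : ∀ u : ↥A, u ≠ 1 → μ (B1 ∩ (T u⁻¹) ⁻¹' B1) = 0 := by
    intro u hu
    have hBumeas : MeasurableSet (B1 ∩ (T u⁻¹) ⁻¹' B1) := hB1meas.inter ((hTmeas _) hB1meas)
    refine gapLemma μ T hTmeas hTmul hTinv _ hBumeas
      (fun _ => Subgroup.centralizer {u}) ?_ ?_ ?_ ?_
    · intro v
      by_cases hv : v ∈ Subgroup.centralizer {u}
      · have h1 : {ω | ω ∈ B1 ∩ (T u⁻¹) ⁻¹' B1 ∧ v ∈ Subgroup.centralizer {u}}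
            = B1 ∩ (T u⁻¹) ⁻¹' B1 := by
          ext ω; simp [hv]
        rw [h1]; exact hBumeas
      · have h1 : {ω | ω ∈ B1 ∩ (T u⁻¹) ⁻¹' B1 ∧ v ∈ Subgroup.centralizer {u}}
            = (∅ : Set (Subgroup G)) := by
          ext ω; simp [hv]
        rw [h1]; exact MeasurableSet.empty
    · intro ω hω a ha
      obtain ⟨hω1, hω2⟩ := hω
      obtain ⟨ha1, ha2⟩ := ha
      have h1 : (u : G) * g * (u : G)⁻¹ ∈ ω := by
        rw [Set.mem_preimage] at hω2
        have h' := (hEmem _).mp hω2.1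
        rw [hTmem] at h'
        simpa using h'
      have h2 : (a : G) * g * (a : G)⁻¹ ∈ ω := by
        have h' := (hEmem _).mp ha1.1
        rw [hTmem] at h'
        simpa using h'
      have h3 : ((a : G) * (u : G)) * g * ((a : G) * (u : G))⁻¹ ∈ ω := by
        rw [Set.mem_preimage, ← hTmul] at ha2
        have h' := (hEmem _).mp ha2.1
        rw [hTmem] at h'
        have e : ((u⁻¹ * a⁻¹ : ↥A) : G)⁻¹ * g * ((u⁻¹ * a⁻¹ : ↥A) : G)
            = ((a : G) * (u : G)) * g * ((a : G) * (u : G))⁻¹ := by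
          push_cast; group
        rw [e] at h'
        exact h'
      have hcommu := K2 ω u a hω1 h1 h2 h3
      rw [Subgroup.mem_centralizer_iff]
      intro h hh
      rw [Set.mem_singleton_iff] at hh
      subst hh
      exact hcommu.symm
    · intro ω _ a _
      rfl
    · intro ω _
      exact aux_centralizer_index_eq_zero hu
  -- gap-lemma application: B1 with no nontrivial returns
  have hB1null : μ B1 = 0 := by
    set B'' : Set (Subgroup G) := {ω | ω ∈ B1 ∧ ∀ u : ↥A, u ≠ 1 → T u⁻¹ ω ∉ B1} with hB''
    have hBmeas'' : MeasurableSet B'' := by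
      have h1 : B'' = B1 ∩ ⋂ (u : ↥A), ⋂ (_ : u ≠ 1), ((T u⁻¹) ⁻¹' B1)ᶜ := by
        ext ω
        simp only [hB'', Set.mem_setOf_eq, Set.mem_inter_iff, Set.mem_iInter,
          Set.mem_compl_iff, Set.mem_preimage]
      rw [h1]
      exact hB1meas.inter (MeasurableSet.iInter fun u => MeasurableSet.iInter fun _ =>
        ((hTmeas _) hB1meas).compl)
    have hB''null : μ B'' = 0 := by
      refine gapLemma μ T hTmeas hTmul hTinv B'' hBmeas'' (fun _ => (⊥ : Subgroup ↥A))
        ?_ ?_ ?_ ?_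
      · intro v
        by_cases hv : v ∈ (⊥ : Subgroup ↥A)
        · have h1 : {ω | ω ∈ B'' ∧ v ∈ (⊥ : Subgroup ↥A)} = B'' := by
            ext ω; simp [hv]
          rw [h1]; exact hBmeas''
        · have h1 : {ω | ω ∈ B'' ∧ v ∈ (⊥ : Subgroup ↥A)} = (∅ : Set (Subgroup G)) := by
            ext ω; simp [hv]
          rw [h1]; exact MeasurableSet.empty
      · intro ω hω a ha
        rw [Subgroup.mem_bot]
        by_contra hne
        exact hω.2 a hne ha.1
      · intro ω _ a _
        rfl
      · intro ω _
        rw [Subgroup.index_bot]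
        exact Nat.card_eq_zero_of_infinite
    have hsub : B1 ⊆ B'' ∪ ⋃ (u : ↥A), ⋃ (_ : u ≠ 1), (B1 ∩ (T u⁻¹) ⁻¹' B1) := by
      intro ω hω
      by_cases hall : ∀ u : ↥A, u ≠ 1 → T u⁻¹ ω ∉ B1
      · exact Or.inl ⟨hω, hall⟩
      · push_neg at hall
        obtain ⟨u, hu1, hu2⟩ := hall
        exact Or.inr (Set.mem_iUnion.mpr ⟨u, Set.mem_iUnion.mpr ⟨hu1, ⟨hω, hu2⟩⟩⟩)
    refine measure_mono_null hsub (measure_union_null hB''null ?_)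
    exact measure_iUnion_null fun u => measure_iUnion_null fun hu => hBu u hu
  -- gap-lemma application (b): the main event
  set NT : Set (Subgroup G) := {H | ∃ x : ↥A, (x : G) ∈ H ∧ x ≠ 1} with hNT
  set NotLe : Set (Subgroup G) := {H | ¬ ∀ x : ↥A, (x : G) ∈ H} with hNotLe
  set Bm : Set (Subgroup G) := (E ∩ NT) ∩ NotLe with hBm
  have hNTmeas : MeasurableSet NT := by
    have h1 : NT = ⋃ (x : ↥A), ⋃ (_ : x ≠ 1), {H : Subgroup G | (x : G) ∈ H} := by
      ext H
      simp only [hNT, Set.mem_setOf_eq, Set.mem_iUnion]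
      constructor
      · rintro ⟨x, h1, h2⟩; exact ⟨x, h2, h1⟩
      · rintro ⟨x, h1, h2⟩; exact ⟨x, h2, h1⟩
    rw [h1]
    exact MeasurableSet.iUnion fun x => MeasurableSet.iUnion fun _ => measurableSet_memEvent _
  have hNotLemeas : MeasurableSet NotLe := by
    have h1 : NotLe = (⋂ (x : ↥A), {H : Subgroup G | (x : G) ∈ H})ᶜ := by
      ext H
      simp only [hNotLe, Set.mem_setOf_eq, Set.mem_compl_iff, Set.mem_iInter]
    rw [h1]
    exact (MeasurableSet.iInter fun x => measurableSet_memEvent _).compl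
  have hBmmeas : MeasurableSet Bm := (hEmeas.inter hNTmeas).inter hNotLemeas
  have hNmem : ∀ (H : Subgroup G) (x : ↥A), x ∈ H.comap A.subtype ↔ (x : G) ∈ H := by
    intro H x
    rw [Subgroup.mem_comap]
    simp [Subgroup.coe_subtype]
  have hBmnull : μ Bm = 0 := by
    refine gapLemma μ T hTmeas hTmul hTinv Bm hBmmeas
      (fun H => Subgroup.normalizer (H.comap A.subtype : Set ↥A)) ?_ ?_ ?_ ?_
    · intro u
      have h1 : {ω | ω ∈ Bm ∧ u ∈ Subgroup.normalizer (ω.comap A.subtype : Set ↥A)} = Bm ∩ ⋂ (b : ↥A),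
          {ω : Subgroup G | ((b : G) ∈ ω ↔ ((u * b * u⁻¹ : ↥A) : G) ∈ ω)} := by
        ext ω
        simp only [Set.mem_inter_iff, Set.mem_setOf_eq, Set.mem_iInter]
        constructor
        · rintro ⟨hh1, hh2⟩
          refine ⟨hh1, fun b => ?_⟩
          have h2 := Subgroup.mem_normalizer_iff.mp hh2 b
          rw [hNmem, hNmem] at h2
          exact h2
        · rintro ⟨hh1, hh2⟩
          refine ⟨hh1, Subgroup.mem_normalizer_iff.mpr fun b => ?_⟩
          rw [hNmem, hNmem]
          exact hh2 b
      rw [h1]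
      exact hBmmeas.inter (MeasurableSet.iInter fun b => measurableSet_iffSet
        (measurableSet_memEvent _) (measurableSet_memEvent _))
    · intro ω hω a ha
      have hgω : g ∈ ω := (hEmem _).mp hω.1.1
      have haω : (a : G) * g * (a : G)⁻¹ ∈ ω := by
        have h' := (hEmem _).mp ha.1.1
        rw [hTmem] at h'
        simpa using h'
      refine Subgroup.mem_normalizer_iff.mpr fun b => ?_
      rw [hNmem, hNmem]
      have e : ((a * b * a⁻¹ : ↥A) : G) = (a : G) * (b : G) * (a : G)⁻¹ := by
        push_cast; rfl
      rw [e]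
      exact K1 ω a hgω haω _ (hAU b)
    · intro ω hω a ha
      have hgω : g ∈ ω := (hEmem _).mp hω.1.1
      have haω : (a : G) * g * (a : G)⁻¹ ∈ ω := by
        have h' := (hEmem _).mp ha.1.1
        rw [hTmem] at h'
        simpa using h'
      have hco : (T a⁻¹ ω).comap A.subtype = ω.comap A.subtype := by
        ext b
        rw [hNmem, hNmem, hTmem]
        have e : ((a⁻¹ : ↥A) : G)⁻¹ * (b : G) * ((a⁻¹ : ↥A) : G)
            = (a : G) * (b : G) * (a : G)⁻¹ := by
          push_cast; group
        rw [e]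
        exact (K1 ω a hgω haω _ (hAU b)).symm
      show Subgroup.normalizer ((T a⁻¹ ω).comap A.subtype : Set ↥A) = Subgroup.normalizer (ω.comap A.subtype : Set ↥A)
      rw [hco]
    · intro ω hω
      obtain ⟨⟨hgω, hnt⟩, hnle⟩ := hω
      have hnt' : ∃ x : ↥A, (x : G) ∈ ω ∧ x ≠ 1 := hnt
      have hnle' : ¬ ∀ x : ↥A, (x : G) ∈ ω := hnle
      have hne_bot : ω.comap A.subtype ≠ ⊥ := by
        obtain ⟨x, hx1, hx2⟩ := hnt'
        intro hbot
        have hx3 : x ∈ ω.comap A.subtype := (hNmem ω x).mpr hx1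
        rw [hbot, Subgroup.mem_bot] at hx3
        exact hx2 hx3
      have hne_top : ω.comap A.subtype ≠ ⊤ := by
        intro htop
        refine hnle' fun x => ?_
        have hx : x ∈ ω.comap A.subtype := htop ▸ Subgroup.mem_top x
        exact (hNmem ω x).mp hx
      have hproper : Subgroup.normalizer (ω.comap A.subtype : Set ↥A) ≠ ⊤ := by
        intro htop
        have hnorm : (ω.comap A.subtype).Normal := Subgroup.normalizer_eq_top_iff.mp htop
        rcases hnorm.eq_bot_or_eq_top with h | h
        · exact hne_bot h
        · exact hne_top h
      by_contra hidx
      exact hproper (aux_eq_top_of_index_ne_zero _ hidx)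
  -- combine
  have hfinal : {H : Subgroup G | g ∈ H ∧ ¬ A ≤ H} ⊆ Bm ∪ B1 := by
    intro H hH
    obtain ⟨hgH, hnle⟩ := hH
    by_cases hex : ∃ x : ↥A, (x : G) ∈ H ∧ x ≠ 1
    · refine Or.inl ⟨⟨(hEmem H).mpr hgH, hex⟩, ?_⟩
      intro hall
      refine hnle fun y hy => ?_
      exact hall ⟨y, hy⟩
    · refine Or.inr ⟨(hEmem H).mpr hgH, fun x hx => ?_⟩
      by_contra hne
      exact hex ⟨x, hx, hne⟩
  exact measure_mono_null hfinal (measure_union_null hBmnull hB1null)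


/-- **Corollary 3.3.** Let `G` be a countable group acting faithfully by homeomorphisms
on a second countable Hausdorff space `X` (encoded as a left action of `Gᵐᵒᵖ`, so
`x·g = op g • x`), and let `μ` be an invariant random subgroup of `G`.  Suppose the open
set `U` admits an infinite simple subgroup `A ≤ R_G(U)` contained in every finite-index
subgroup of `R_G(U)`.  Then for `μ`-a.e. `H`: if some `g ∈ H` satisfies `U ∩ U·g = ∅`,
then `A ≤ H`. -/
theorem irs_contains_simple_subgroup
    {G X : Type*} [Group G] [Countable G] [TopologicalSpace X]
    [SecondCountableTopology X] [T2Space X] [MulAction Gᵐᵒᵖ X]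
    (hcont : ∀ g : G, Continuous fun x : X => op g • x)
    (hfaith : ∀ g : G, (∀ x : X, op g • x = x) → g = 1)
    (U : Set X) (hU : IsOpen U)
    (A : Subgroup G) (hAinf : Infinite A) (hAsimple : IsSimpleGroup A)
    (hAle : A ≤ rigidStabilizer G U)
    (hAfi : ∀ K : Subgroup G, K ≤ rigidStabilizer G U →
      K.relIndex (rigidStabilizer G U) ≠ 0 → A ≤ K)
    (μ : Measure (Subgroup G)) [IsProbabilityMeasure μ]
    (hinv : ∀ g : G, ∀ B : Set (Subgroup G), MeasurableSet B →
      μ ((fun H : Subgroup G => conjSubgroup g H) ⁻¹' B) = μ B) :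
    ∀ᵐ H ∂μ, (∃ g ∈ H, U ∩ ((fun x : X => op g • x) '' U) = ∅) → A ≤ H := by
  rw [ae_iff]
  have hsub : {H : Subgroup G | ¬ ((∃ g ∈ H, U ∩ ((fun x : X => op g • x) '' U) = ∅) → A ≤ H)}
      ⊆ ⋃ (g0 : G), ⋃ (_ : U ∩ ((fun x : X => op g0 • x) '' U) = ∅),
        {H : Subgroup G | g0 ∈ H ∧ ¬ A ≤ H} := by
    intro H hH
    rw [Set.mem_setOf_eq, _root_.not_imp] at hH
    obtain ⟨⟨g0, hg0H, hg0⟩, hnle⟩ := hH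
    exact Set.mem_iUnion.mpr ⟨g0, Set.mem_iUnion.mpr ⟨hg0, hg0H, hnle⟩⟩
  refine measure_mono_null hsub ?_
  exact measure_iUnion_null fun g0 => measure_iUnion_null fun hg0 =>
    perG_null hfaith U A hAinf hAsimple hAle μ hinv g0 hg0
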